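/- Let v(x) = 2i e^{iα} on (0,1) and v ≡ 0 outside [0,1], with α ∈ ℝ. Then the function ψ₀(x) = 2e^{iα}(1−x) for x ∈ (0,1), ψ₀ ≡ 0 outside [0,1], satisfies i·ψ₀'(x) + v(x)·[½ψ₀(0⁻) + ½e^{−iα}ψ₀(0⁺)] = 0 for x ∉ {0}, and the boundary condition i·ψ₀(0⁻) − i·e^{−iα}ψ₀(0⁺) = ⟨ψ₀, v⟩_{L²}, where ψ₀(0⁻)=0 and ψ₀(0⁺)=2e^{iα}. In particular λ = 0 is an eigenvalue of A(v,α). -/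

import Mathlib

open Complex MeasureTheory Set

theorem stmt_13 (α : ℝ)
    (v : ℝ → ℂ) (hv : ∀ x : ℝ, v x = if x ∈ Set.Ioo (0 : ℝ) 1 then 2 * Complex.I * Complex.exp (Complex.I * α) else 0)
    (ψ₀ : ℝ → ℂ)
    (hψ₀ : ∀ x : ℝ, ψ₀ x = if x ∈ Set.Ioo (0 : ℝ) 1 then 2 * Complex.exp (Complex.I * α) * (1 - x) else 0) :
    (∀ x : ℝ, x ≠ 0 →
        Complex.I * deriv ψ₀ x +
          v x * ((1 / 2) * 0 + (1 / 2) * Complex.exp (-(Complex.I * α)) *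
            (2 * Complex.exp (Complex.I * α))) = 0) ∧
    (Complex.I * 0 - Complex.I * Complex.exp (-(Complex.I * α)) * (2 * Complex.exp (Complex.I * α))
        = ∫ x : ℝ, ψ₀ x * (starRingEnd ℂ) (v x)) := by
  have hee : Complex.exp (-(Complex.I * α)) * Complex.exp (Complex.I * α) = 1 := by
    rw [← Complex.exp_add]; simp
  set e : ℂ := Complex.exp (Complex.I * α) with he
  have hene : e ≠ 0 := Complex.exp_ne_zero _
  constructor
  · intro x hx
    rcases lt_trichotomy x 0 with h0 | h0 | h0
    · -- x < 0 : ψ₀ = 0 near x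
      have hz : ψ₀ =ᶠ[nhds x] (fun _ => (0:ℂ)) := by
        filter_upwards [Iio_mem_nhds h0] with y hy
        rw [hψ₀ y, if_neg]
        intro hmem; exact absurd hmem.1 (not_lt.mpr hy.le)
      rw [hz.deriv_eq, deriv_const, hv x, if_neg (by intro hmem; exact absurd hmem.1 (not_lt.mpr h0.le))]
      ring
    · exact absurd h0 hx
    · rcases lt_trichotomy x 1 with h1 | h1 | h1
      · -- x ∈ Ioo 0 1
        have hmem : x ∈ Set.Ioo (0:ℝ) 1 := ⟨h0, h1⟩
        have hz : ψ₀ =ᶠ[nhds x] (fun y : ℝ => 2 * e * (1 - (y:ℂ))) := by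
          filter_upwards [isOpen_Ioo.mem_nhds hmem] with y hy
          rw [hψ₀ y, if_pos hy]
        have hd : HasDerivAt (fun y : ℝ => 2 * e * (1 - (y:ℂ))) (-(2*e)) x := by
          have : HasDerivAt (fun y : ℝ => (y:ℂ)) 1 x := Complex.ofRealCLM.hasDerivAt
          simpa using ((hasDerivAt_const x (1:ℂ)).sub this).const_mul (2*e)
        rw [hz.deriv_eq, hd.deriv, hv x, if_pos hmem]
        rw [mul_zero, zero_add, mul_comm ((1:ℂ)/2) _]
        rw [show Complex.exp (-(Complex.I * α)) * (1/2) * (2 * e) = Complex.exp (-(Complex.I*α)) * e from by ring, hee]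
        ring
      · -- x = 1 : not differentiable, deriv = 0
        subst h1
        have hpsi1 : ψ₀ 1 = 0 := by rw [hψ₀ 1, if_neg]; simp
        have hnd : ¬ DifferentiableAt ℝ ψ₀ 1 := by
          intro h
          have hd := h.hasDerivAt
          set d := deriv ψ₀ 1
          -- right: ψ₀ = 0 on Ici 1
          have hr : HasDerivWithinAt ψ₀ 0 (Set.Ici 1) 1 := by
            refine (hasDerivWithinAt_const 1 _ (0:ℂ)).congr ?_ hpsi1
            intro y hy
            rw [hψ₀ y, if_neg]
            intro hmem; exact absurd hmem.2 (not_lt.mpr hy)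
          have hdu0 : d = 0 := by
            have := (uniqueDiffOn_Ici (1:ℝ) 1 Set.self_mem_Ici).eq
              (hd.hasDerivWithinAt (s := Set.Ici 1)).hasFDerivWithinAt hr.hasFDerivWithinAt
            simpa using ContinuousLinearMap.toSpanSingleton_inj.mp this
          -- left: ψ₀ = 2e(1-x) on Icc (1/2) 1
          have hl : HasDerivWithinAt ψ₀ (-(2*e)) (Set.Icc (1/2 : ℝ) 1) 1 := by
            have hd2 : HasDerivAt (fun y : ℝ => 2 * e * (1 - (y:ℂ))) (-(2*e)) 1 := by
              have : HasDerivAt (fun y : ℝ => (y:ℂ)) 1 1 := Complex.ofRealCLM.hasDerivAt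
              simpa using ((hasDerivAt_const (1:ℝ) (1:ℂ)).sub this).const_mul (2*e)
            refine (hd2.hasDerivWithinAt).congr ?_ (by simpa using hpsi1)
            intro y hy
            rcases eq_or_lt_of_le hy.2 with h2 | h2
            · rw [h2, hpsi1]; norm_num
            · rw [hψ₀ y, if_pos ⟨lt_of_lt_of_le (by norm_num) hy.1, h2⟩]
          have hdul : d = -(2*e) := by
            have := (uniqueDiffOn_Icc (by norm_num : (1/2:ℝ) < 1) 1 (by norm_num)).eq
              (hd.hasDerivWithinAt (s := Set.Icc (1/2:ℝ) 1)).hasFDerivWithinAt hl.hasFDerivWithinAt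
            simpa using ContinuousLinearMap.toSpanSingleton_inj.mp this
          rw [hdu0] at hdul
          exact hene (by linear_combination (1/2 : ℂ) * hdul)
        rw [deriv_zero_of_not_differentiableAt hnd,
          hv 1, if_neg (by simp)]
        ring
      · -- x > 1
        have hz : ψ₀ =ᶠ[nhds x] (fun _ => (0:ℂ)) := by
          filter_upwards [Ioi_mem_nhds h1] with y hy
          rw [hψ₀ y, if_neg]
          intro hmem; exact absurd hmem.2 (not_lt.mpr (le_of_lt hy))
        rw [hz.deriv_eq, deriv_const, hv x, if_neg (by intro hmem; exact absurd hmem.2 (not_lt.mpr h1.le))]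
        ring
  · -- integral
    have hintegrand : ∀ x : ℝ, ψ₀ x * (starRingEnd ℂ) (v x)
        = Set.indicator (Set.Ioo (0:ℝ) 1) (fun x : ℝ => (-4*Complex.I) * ((1 - x : ℝ) : ℂ)) x := by
      intro x
      rw [hψ₀ x, hv x]
      by_cases hx : x ∈ Set.Ioo (0:ℝ) 1
      · rw [if_pos hx, if_pos hx, Set.indicator_of_mem hx]
        have hce : (starRingEnd ℂ) e = Complex.exp (-(Complex.I * α)) := by
          rw [he, ← Complex.exp_conj, map_mul, Complex.conj_I, Complex.conj_ofReal, neg_mul]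
        simp only [map_mul, map_ofNat, Complex.conj_I, hce]
        push_cast
        linear_combination (-4 * Complex.I * (1 - (x:ℂ))) * hee
      · rw [if_neg hx, if_neg hx, Set.indicator_of_notMem hx]; ring
    rw [show (∫ x : ℝ, ψ₀ x * (starRingEnd ℂ) (v x)) = ∫ x : ℝ,
      Set.indicator (Set.Ioo (0:ℝ) 1) (fun x : ℝ => (-4*Complex.I) * ((1 - x : ℝ) : ℂ)) x from by
        congr 1; funext x; exact hintegrand x]
    rw [MeasureTheory.integral_indicator measurableSet_Ioo]
    rw [← MeasureTheory.integral_Ioc_eq_integral_Ioo,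
      ← intervalIntegral.integral_of_le (by norm_num : (0:ℝ) ≤ 1)]
    rw [intervalIntegral.integral_const_mul, intervalIntegral.integral_ofReal]
    have : ∫ x in (0:ℝ)..1, (1 - x) = 1/2 := by
      simp [intervalIntegral.integral_sub intervalIntegrable_const intervalIntegral.intervalIntegrable_id,
        integral_id]
      norm_num
    rw [this]
    push_cast
    linear_combination (-2 * Complex.I) * hee
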